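/- arXiv:1906.00236 — 2 statements merged into one kernel-verified Lean document; each statement's English description precedes it below -/
import Mathlib

section
/- Let P = {1, …, N} with N ≥ 1, let A_i (i ∈ P) be d×d real matrices, and let m ≥ 1 with N·m ≥ 2. Let M ≥ 0, ρ ≥ 0, ε ≥ 0 and suppose there is p ∈ P such that: ‖A_i‖ ≤ M for all i ∈ P; ‖A_p^m‖ ≤ ρ; ‖A_p A_i − A_i A_p‖ ≤ ε for all i ∈ P with i ≠ p; and there exists γ > 0 with ρ · M^{(N−1)m} + (N−1) · (m(m+1)/2) · M^{Nm−2} · ε ≤ e^{−γNm}. Let σ : ℕ → P be a switching signal such that for every s ∈ ℕ there exists t with s ≤ t < s + N and σ(t) = p (the subsystem p is activated at least once in every N consecutive time steps). Then there exists c > 0 such that ‖A_{σ(t−1)} ⋯ A_{σ(1)} A_{σ(0)}‖ ≤ c e^{−γt} for all t ≥ 1; consequently every trajectory x(t+1) = A_{σ(t)} x(t) satisfies ‖x(t)‖ ≤ c e^{−γt} ‖x(0)‖, i.e., the switched system is globally exponentially stable under σ. -/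
section Aux
variable {R : Type*} [NormedRing R]

lemma aux_pow_norm_le {M : ℝ} {P : R} (h1 : ‖(1:R)‖ ≤ 1) (hP : ‖P‖ ≤ M) :
    ∀ k : ℕ, ‖P ^ k‖ ≤ M ^ k := by
  have hM : 0 ≤ M := (norm_nonneg P).trans hP
  intro k
  induction k with
  | zero => simpa using h1
  | succ k ih =>
    calc ‖P ^ (k+1)‖ = ‖P ^ k * P‖ := by rw [pow_succ]
    _ ≤ ‖P ^ k‖ * ‖P‖ := norm_mul_le _ _
    _ ≤ M ^ k * M := mul_le_mul ih hP (norm_nonneg _) (pow_nonneg hM _)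
    _ = M ^ (k+1) := (pow_succ M k).symm

lemma aux_prod_norm_le {M : ℝ} (hM : 0 ≤ M) (h1 : ‖(1:R)‖ ≤ 1) :
    ∀ l : List R, (∀ a ∈ l, ‖a‖ ≤ M) → ‖l.prod‖ ≤ M ^ l.length := by
  intro l
  induction l with
  | nil => intro _; simpa using h1
  | cons a l ih =>
    intro h
    calc ‖(a :: l).prod‖ = ‖a * l.prod‖ := by rw [List.prod_cons]
    _ ≤ ‖a‖ * ‖l.prod‖ := norm_mul_le _ _
    _ ≤ M * M ^ l.length := mul_le_mul (h a (List.mem_cons_self)) (ih fun b hb => h b (List.mem_cons_of_mem _ hb)) (norm_nonneg _) hM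
    _ = M ^ (a :: l).length := by rw [List.length_cons, pow_succ']

lemma aux_comm_list {M ε : ℝ} (hM : 0 ≤ M) (hε : 0 ≤ ε) (h1 : ‖(1:R)‖ ≤ 1) (P : R) :
    ∀ l : List R, (∀ a ∈ l, ‖a‖ ≤ M) → (∀ a ∈ l, ‖P * a - a * P‖ ≤ ε) →
      ‖l.prod * P - P * l.prod‖ ≤ l.length * ε * M ^ (l.length - 1) := by
  intro l
  induction l with
  | nil => intro _ _; simp
  | cons a l ih =>
    intro hn hc
    have key : (a :: l).prod * P - P * (a :: l).prod
        = a * (l.prod * P - P * l.prod) + (a * P - P * a) * l.prod := by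
      rw [List.prod_cons]; noncomm_ring
    have ha : ‖a‖ ≤ M := hn a (List.mem_cons_self)
    have hac : ‖a * P - P * a‖ ≤ ε := by
      rw [norm_sub_rev]; exact hc a (List.mem_cons_self)
    have hlp : ‖l.prod‖ ≤ M ^ l.length :=
      aux_prod_norm_le hM h1 l fun b hb => hn b (List.mem_cons_of_mem _ hb)
    have hcomm := ih (fun b hb => hn b (List.mem_cons_of_mem _ hb))
      (fun b hb => hc b (List.mem_cons_of_mem _ hb))
    have step : ‖(a :: l).prod * P - P * (a :: l).prod‖
        ≤ M * (l.length * ε * M ^ (l.length - 1)) + ε * M ^ l.length := by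
      rw [key]
      calc ‖a * (l.prod * P - P * l.prod) + (a * P - P * a) * l.prod‖
          ≤ ‖a * (l.prod * P - P * l.prod)‖ + ‖(a * P - P * a) * l.prod‖ := norm_add_le _ _
      _ ≤ ‖a‖ * ‖l.prod * P - P * l.prod‖ + ‖a * P - P * a‖ * ‖l.prod‖ :=
          add_le_add (norm_mul_le _ _) (norm_mul_le _ _)
      _ ≤ M * (l.length * ε * M ^ (l.length - 1)) + ε * M ^ l.length :=
          add_le_add (mul_le_mul ha hcomm (norm_nonneg _) hM)
            (mul_le_mul hac hlp (norm_nonneg _) hε)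
    refine step.trans ?_
    rcases Nat.eq_zero_or_pos l.length with h0 | h0
    · simp [h0]
    · have hMM : M * M ^ (l.length - 1) = M ^ l.length := by
        rw [← pow_succ']; congr 1; omega
      have : M * ((l.length : ℝ) * ε * M ^ (l.length - 1)) = l.length * ε * M ^ l.length := by
        rw [← hMM]; ring
      rw [this, List.length_cons, Nat.add_sub_cancel]
      push_cast
      nlinarith [mul_nonneg hε (pow_nonneg hM l.length)]

lemma aux_comm_pow {M δ : ℝ} (hδ : 0 ≤ δ) (hM : 0 ≤ M) (h1 : ‖(1:R)‖ ≤ 1)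
    {P X : R} (hP : ‖P‖ ≤ M) (h : ‖X * P - P * X‖ ≤ δ) :
    ∀ k : ℕ, ‖X * P ^ k - P ^ k * X‖ ≤ k * δ * M ^ (k - 1) := by
  intro k
  induction k with
  | zero => simp
  | succ k ih =>
    have key : X * P ^ (k+1) - P ^ (k+1) * X
        = (X * P ^ k - P ^ k * X) * P + P ^ k * (X * P - P * X) := by
      rw [pow_succ]; noncomm_ring
    have step : ‖X * P ^ (k+1) - P ^ (k+1) * X‖
        ≤ (k * δ * M ^ (k-1)) * M + M ^ k * δ := by
      rw [key]
      calc ‖(X * P ^ k - P ^ k * X) * P + P ^ k * (X * P - P * X)‖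
          ≤ ‖(X * P ^ k - P ^ k * X) * P‖ + ‖P ^ k * (X * P - P * X)‖ := norm_add_le _ _
      _ ≤ ‖X * P ^ k - P ^ k * X‖ * ‖P‖ + ‖P ^ k‖ * ‖X * P - P * X‖ :=
          add_le_add (norm_mul_le _ _) (norm_mul_le _ _)
      _ ≤ (k * δ * M ^ (k-1)) * M + M ^ k * δ :=
          add_le_add (mul_le_mul ih hP (norm_nonneg _)
              (by positivity))
            (mul_le_mul (aux_pow_norm_le h1 hP k) h (norm_nonneg _) (pow_nonneg hM _))
    refine step.trans ?_
    rcases Nat.eq_zero_or_pos k with h0 | h0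
    · simp [h0]
    · have hMM : M ^ (k-1) * M = M ^ k := by
        rw [← pow_succ]; congr 1; omega
      have e1 : ((k:ℝ) * δ * M ^ (k-1)) * M = k * δ * M ^ k := by rw [← hMM]; ring
      rw [e1, Nat.add_sub_cancel]
      push_cast
      nlinarith [mul_nonneg hδ (pow_nonneg hM k)]

end Aux

lemma aux_id2 {R : Type*} [NormedRing R] (U P V : R) :
    U * P * V - P * (U * V) = (U * P - P * U) * V := by
  noncomm_ring

lemma aux_id3 {R : Type*} [NormedRing R] (Xb Phi P B C Q : R) :
    Xb * Phi - (P * Q) * (B * C)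
      = (Xb - P * B) * Phi + P * B * (Phi - Q * C) + P * ((B * Q - Q * B) * C) := by
  noncomm_ring

/-- The operator norm on `d × d` real matrices induced by the Euclidean norm on `ℝ^d`. -/
noncomputable def opNorm {d : ℕ} (A : Matrix (Fin d) (Fin d) ℝ) : ℝ :=
  ‖Matrix.toEuclideanCLM (𝕜 := ℝ) A‖

/-- The state-transition matrix `Φ t = A (σ (t-1)) * ⋯ * A (σ 1) * A (σ 0)` of a
discrete-time switched linear system. -/
noncomputable def transitionMatrix {d : ℕ} {P : Type*} (A : P → Matrix (Fin d) (Fin d) ℝ)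
    (σ : ℕ → P) (t : ℕ) : Matrix (Fin d) (Fin d) ℝ :=
  ((List.range t).reverse.map (fun i => A (σ i))).prod

set_option maxHeartbeats 1600000 in
theorem ges_of_frequent_stable_subsystem {d N m : ℕ} (hN : 1 ≤ N) (hm : 1 ≤ m)
    (hNm : 2 ≤ N * m)
    (A : Fin N → Matrix (Fin d) (Fin d) ℝ) (p : Fin N)
    (M ρ ε γ : ℝ) (hM : 0 ≤ M) (hρ : 0 ≤ ρ) (hε : 0 ≤ ε) (hγ : 0 < γ)
    (hA : ∀ i, opNorm (A i) ≤ M)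
    (hApm : opNorm (A p ^ m) ≤ ρ)
    (hcomm : ∀ i, i ≠ p → opNorm (A p * A i - A i * A p) ≤ ε)
    (hkey : ρ * M ^ ((N - 1) * m) +
        ((N : ℝ) - 1) * ((m : ℝ) * ((m : ℝ) + 1) / 2) * M ^ (N * m - 2) * ε ≤
        Real.exp (-γ * (N * m : ℕ)))
    (σ : ℕ → Fin N)
    (hσ : ∀ s : ℕ, ∃ t, s ≤ t ∧ t < s + N ∧ σ t = p) :
    ∃ c : ℝ, 0 < c ∧
      (∀ t : ℕ, 1 ≤ t →
          opNorm (transitionMatrix A σ t) ≤ c * Real.exp (-γ * t)) ∧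
      (∀ x₀ : EuclideanSpace ℝ (Fin d), ∀ t : ℕ, 1 ≤ t →
          ‖Matrix.toEuclideanCLM (𝕜 := ℝ) (transitionMatrix A σ t) x₀‖ ≤
            c * Real.exp (-γ * t) * ‖x₀‖) := by
  classical
  have h1 : ‖(1 : EuclideanSpace ℝ (Fin d) →L[ℝ] EuclideanSpace ℝ (Fin d))‖ ≤ 1 :=
    ContinuousLinearMap.norm_id_le
  set Bσ : ℕ → EuclideanSpace ℝ (Fin d) →L[ℝ] EuclideanSpace ℝ (Fin d) :=
    fun i => Matrix.toEuclideanCLM (𝕜 := ℝ) (A (σ i)) with hBσ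
  set Pc : EuclideanSpace ℝ (Fin d) →L[ℝ] EuclideanSpace ℝ (Fin d) :=
    Matrix.toEuclideanCLM (𝕜 := ℝ) (A p) with hPc
  set W : ℕ → ℕ → (EuclideanSpace ℝ (Fin d) →L[ℝ] EuclideanSpace ℝ (Fin d)) :=
    fun s L => ((List.range' s L).reverse.map Bσ).prod with hW
  have hN' : (1:ℝ) ≤ (N:ℝ) := by exact_mod_cast hN
  have hNn : (0:ℝ) ≤ (N:ℝ) - 1 := by linarith
  have hBn : ∀ i : ℕ, ‖Bσ i‖ ≤ M := fun i => hA (σ i)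
  have hPn : ‖Pc‖ ≤ M := hA p
  have hBcm : ∀ i : ℕ, ‖Pc * Bσ i - Bσ i * Pc‖ ≤ ε := by
    intro i
    by_cases hi : σ i = p
    · have e : Bσ i = Pc := by simp only [hBσ, hPc, hi]
      rw [e, sub_self, norm_zero]; exact hε
    · have h := hcomm (σ i) hi
      have e : Pc * Bσ i - Bσ i * Pc
          = Matrix.toEuclideanCLM (𝕜 := ℝ) (A p * A (σ i) - A (σ i) * A p) := by
        simp [hPc, hBσ, map_sub, map_mul]
      rw [e]; exact h
  have hmem : ∀ (l : List ℕ), ∀ x ∈ l.map Bσ, ‖x‖ ≤ M := by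
    intro l x hx
    obtain ⟨i, _, rfl⟩ := List.mem_map.mp hx
    exact hBn i
  have hmemc : ∀ (l : List ℕ), ∀ x ∈ l.map Bσ, ‖Pc * x - x * Pc‖ ≤ ε := by
    intro l x hx
    obtain ⟨i, _, rfl⟩ := List.mem_map.mp hx
    exact hBcm i
  have hWadd : ∀ s L1 L2, W s (L1 + L2) = W (s + L1) L2 * W s L1 := by
    intro s L1 L2
    have h : List.range' s (L1 + L2) = List.range' s L1 ++ List.range' (s + L1) L2 := by
      have h := List.range'_append (s := s) (m := L1) (n := L2) (step := 1)
      simp only [one_mul] at h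
      exact h.symm
    simp only [hW, h, List.reverse_append, List.map_append, List.prod_append]
  have hWnorm : ∀ s L, ‖W s L‖ ≤ M ^ L := by
    intro s L
    have h := aux_prod_norm_le hM h1 ((List.range' s L).reverse.map Bσ) (hmem _)
    rwa [List.length_map, List.length_reverse, List.length_range'] at h
  -- main induction
  have main : ∀ k : ℕ, ∀ s : ℕ,
      ∃ Rm : EuclideanSpace ℝ (Fin d) →L[ℝ] EuclideanSpace ℝ (Fin d),
      ‖Rm‖ ≤ M ^ (k * (N - 1)) ∧
      ‖W s (k * N) - Pc ^ k * Rm‖ ≤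
        ((N:ℝ) - 1) * ((k:ℝ) * ((k:ℝ) + 1) / 2) * ε * M ^ (k * N - 2) := by
    intro k
    induction k with
    | zero =>
      intro s
      refine ⟨1, by rw [Nat.zero_mul, pow_zero]; exact h1, ?_⟩
      have hw0 : W s (0 * N) = 1 := by
        rw [Nat.zero_mul]
        simp only [hW, List.range'_zero, List.reverse_nil, List.map_nil, List.prod_nil]
      rw [hw0, pow_zero, one_mul, sub_self, norm_zero]
      norm_num
    | succ k ih =>
      intro s
      obtain ⟨Rm, hR, hEk⟩ := ih s
      obtain ⟨t, ht1, ht2, htp⟩ := hσ (s + k * N)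
      set a := s + k * N with ha
      have hsplit : List.range' a N
          = List.range' a (t - a) ++ t :: List.range' (t + 1) (a + N - 1 - t) := by
        have h2 : List.range' a (t - a) ++ List.range' (a + (t - a)) (N - (t - a)) 1
            = List.range' a ((N - (t - a)) + (t - a)) := by
          simpa [Nat.add_comm] using List.range'_append (s := a) (m := t - a) (n := N - (t - a)) (step := 1)
        rw [show a + (t - a) = t by omega] at h2
        rw [show (N - (t - a)) + (t - a) = N by omega] at h2
        rw [← h2, show N - (t - a) = (a + N - 1 - t) + 1 by omega, List.range'_succ]
      set u := (List.range' (t + 1) (a + N - 1 - t)).reverse.map Bσ with hu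
      set v := (List.range' a (t - a)).reverse.map Bσ with hv
      have hulen : u.length = a + N - 1 - t := by simp [hu]
      have hvlen : v.length = t - a := by simp [hv]
      have huv : u.length + v.length = N - 1 := by omega
      have hule : u.length ≤ N - 1 := by omega
      have hBt : Bσ t = Pc := by simp [hBσ, hPc, htp]
      have hblock : W a N = u.prod * Pc * v.prod := by
        show ((List.range' a N).reverse.map Bσ).prod = u.prod * Pc * v.prod
        rw [hu, hv]
        simp only [hsplit, List.reverse_append, List.reverse_cons, List.map_append,
          List.prod_append, List.map_cons, List.prod_cons, List.map_nil, List.prod_nil,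
          hBt, mul_one]
      have hune : ∀ x ∈ u, ‖x‖ ≤ M := by rw [hu]; exact hmem _
      have hucm : ∀ x ∈ u, ‖Pc * x - x * Pc‖ ≤ ε := by rw [hu]; exact hmemc _
      have hvne : ∀ x ∈ v, ‖x‖ ≤ M := by rw [hv]; exact hmem _
      have hvcm : ∀ x ∈ v, ‖Pc * x - x * Pc‖ ≤ ε := by rw [hv]; exact hmemc _
      have hu_comm : ‖u.prod * Pc - Pc * u.prod‖ ≤ u.length * ε * M ^ (u.length - 1) :=
        aux_comm_list hM hε h1 Pc u hune hucm
      have hu_n : ‖u.prod‖ ≤ M ^ u.length := aux_prod_norm_le hM h1 u hune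
      have hv_n : ‖v.prod‖ ≤ M ^ v.length := aux_prod_norm_le hM h1 v hvne
      set B' := u.prod * v.prod with hB'
      have hRHSnn : (0:ℝ) ≤ ((N:ℝ) - 1) * ε * M ^ (N - 2) :=
        mul_nonneg (mul_nonneg hNn hε) (pow_nonneg hM _)
      have hpull : ‖W a N - Pc * B'‖ ≤ ((N:ℝ) - 1) * ε * M ^ (N - 2) := by
        have e : W a N - Pc * B' = (u.prod * Pc - Pc * u.prod) * v.prod := by
          rw [hblock, hB']; exact aux_id2 _ _ _
        rw [e]
        have step : ‖(u.prod * Pc - Pc * u.prod) * v.prod‖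
            ≤ (u.length * ε * M ^ (u.length - 1)) * M ^ v.length := by
          calc ‖(u.prod * Pc - Pc * u.prod) * v.prod‖
              ≤ ‖u.prod * Pc - Pc * u.prod‖ * ‖v.prod‖ := norm_mul_le _ _
          _ ≤ (u.length * ε * M ^ (u.length - 1)) * M ^ v.length :=
              mul_le_mul hu_comm hv_n (norm_nonneg _) (by positivity)
        refine step.trans ?_
        rcases Nat.eq_zero_or_pos u.length with h0 | h0
        · rw [h0]
          simpa using hRHSnn
        · have hpw : M ^ (u.length - 1) * M ^ v.length = M ^ (N - 2) := by
            rw [← pow_add]; congr 1; omega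
          have hcast : (u.length : ℝ) ≤ (N:ℝ) - 1 := by
            have h2 : ((N - 1 : ℕ) : ℝ) = (N:ℝ) - 1 := by
              push_cast [Nat.cast_sub hN]; ring
            rw [← h2]; exact_mod_cast hule
          calc (u.length * ε * M ^ (u.length - 1)) * M ^ v.length
              = (u.length : ℝ) * ε * (M ^ (u.length - 1) * M ^ v.length) := by ring
          _ = (u.length : ℝ) * ε * M ^ (N - 2) := by rw [hpw]
          _ ≤ ((N:ℝ) - 1) * ε * M ^ (N - 2) := by
              have : (0:ℝ) ≤ ε * M ^ (N - 2) := mul_nonneg hε (pow_nonneg hM _)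
              nlinarith
      have hB'_n : ‖B'‖ ≤ M ^ (N - 1) := by
        calc ‖B'‖ ≤ ‖u.prod‖ * ‖v.prod‖ := norm_mul_le _ _
        _ ≤ M ^ u.length * M ^ v.length :=
            mul_le_mul hu_n hv_n (norm_nonneg _) (pow_nonneg hM _)
        _ = M ^ (N - 1) := by rw [← pow_add, huv]
      have hB'_comm : ‖B' * Pc - Pc * B'‖ ≤ ((N:ℝ) - 1) * ε * M ^ (N - 2) := by
        have h := aux_comm_list hM hε h1 Pc (u ++ v)
          (by intro x hx; rcases List.mem_append.mp hx with h' | h'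
              exacts [hune x h', hvne x h'])
          (by intro x hx; rcases List.mem_append.mp hx with h' | h'
              exacts [hucm x h', hvcm x h'])
        rw [List.prod_append, List.length_append, huv] at h
        have h2 : ((N - 1 : ℕ) : ℝ) = (N:ℝ) - 1 := by
          push_cast [Nat.cast_sub hN]; ring
        have h3 : N - 1 - 1 = N - 2 := by omega
        rw [h2, h3] at h
        exact h
      have hpowc : ‖B' * Pc ^ k - Pc ^ k * B'‖
          ≤ (k:ℝ) * (((N:ℝ) - 1) * ε * M ^ (N - 2)) * M ^ (k - 1) :=
        aux_comm_pow hRHSnn hM h1 hPn hB'_comm k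
      set R' := B' * Rm with hR'
      have hR'n : ‖R'‖ ≤ M ^ ((k + 1) * (N - 1)) := by
        calc ‖R'‖ ≤ ‖B'‖ * ‖Rm‖ := norm_mul_le _ _
        _ ≤ M ^ (N - 1) * M ^ (k * (N - 1)) :=
            mul_le_mul hB'_n hR (norm_nonneg _) (pow_nonneg hM _)
        _ = M ^ ((k + 1) * (N - 1)) := by rw [← pow_add]; congr 1; ring
      have hWsplit : W s ((k + 1) * N) = W a N * W s (k * N) := by
        rw [show (k + 1) * N = k * N + N by ring, hWadd, ← ha]
      have hid : W s ((k + 1) * N) - Pc ^ (k + 1) * R'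
          = (W a N - Pc * B') * W s (k * N)
            + Pc * B' * (W s (k * N) - Pc ^ k * Rm)
            + Pc * ((B' * Pc ^ k - Pc ^ k * B') * Rm) := by
        rw [hWsplit, hR', pow_succ']
        exact aux_id3 _ _ _ _ _ _
      have hT : ‖W s ((k + 1) * N) - Pc ^ (k + 1) * R'‖ ≤
          (((N:ℝ) - 1) * ε * M ^ (N - 2)) * M ^ (k * N)
          + M * M ^ (N - 1) * (((N:ℝ) - 1) * ((k:ℝ) * ((k:ℝ) + 1) / 2) * ε * M ^ (k * N - 2))
          + M * (((k:ℝ) * (((N:ℝ) - 1) * ε * M ^ (N - 2)) * M ^ (k - 1)) * M ^ (k * (N - 1))) := by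
        rw [hid]
        refine norm_add₃_le.trans ?_
        have hT1 : ‖(W a N - Pc * B') * W s (k * N)‖
            ≤ (((N:ℝ) - 1) * ε * M ^ (N - 2)) * M ^ (k * N) :=
          (norm_mul_le _ _).trans
            (mul_le_mul hpull (hWnorm _ _) (norm_nonneg _) hRHSnn)
        have hT2 : ‖Pc * B' * (W s (k * N) - Pc ^ k * Rm)‖
            ≤ M * M ^ (N - 1) * (((N:ℝ) - 1) * ((k:ℝ) * ((k:ℝ) + 1) / 2) * ε * M ^ (k * N - 2)) := by
          have hPB : ‖Pc * B'‖ ≤ M * M ^ (N - 1) :=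
            (norm_mul_le _ _).trans
              (mul_le_mul hPn hB'_n (norm_nonneg _) hM)
          exact (norm_mul_le _ _).trans
            (mul_le_mul hPB hEk (norm_nonneg _) (by positivity))
        have hT3 : ‖Pc * ((B' * Pc ^ k - Pc ^ k * B') * Rm)‖
            ≤ M * (((k:ℝ) * (((N:ℝ) - 1) * ε * M ^ (N - 2)) * M ^ (k - 1)) * M ^ (k * (N - 1))) := by
          have hin : ‖(B' * Pc ^ k - Pc ^ k * B') * Rm‖
              ≤ ((k:ℝ) * (((N:ℝ) - 1) * ε * M ^ (N - 2)) * M ^ (k - 1)) * M ^ (k * (N - 1)) :=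
            (norm_mul_le _ _).trans
              (mul_le_mul hpowc hR (norm_nonneg _)
                (by positivity))
          exact (norm_mul_le _ _).trans
            (mul_le_mul hPn hin (norm_nonneg _) hM)
        linarith
      refine ⟨R', hR'n, hT.trans ?_⟩
      have I1 : (((N:ℝ) - 1) * ε * M ^ (N - 2)) * M ^ (k * N)
          ≤ ((N:ℝ) - 1) * ε * M ^ ((k + 1) * N - 2) := by
        by_cases hN2 : 2 ≤ N
        · have e : M ^ (N - 2) * M ^ (k * N) = M ^ ((k + 1) * N - 2) := by
            rw [← pow_add]; congr 1
            have h' : (k + 1) * N = k * N + N := by ring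
            omega
          apply le_of_eq
          rw [← e]; ring
        · have hN1 : N = 1 := by omega
          rw [hN1]; norm_num
      have I2 : M * M ^ (N - 1) * (((N:ℝ) - 1) * ((k:ℝ) * ((k:ℝ) + 1) / 2) * ε * M ^ (k * N - 2))
          ≤ ((N:ℝ) - 1) * ((k:ℝ) * ((k:ℝ) + 1) / 2) * ε * M ^ ((k + 1) * N - 2) := by
        by_cases hk2 : 2 ≤ k * N
        · have e : M * M ^ (N - 1) * M ^ (k * N - 2) = M ^ ((k + 1) * N - 2) := by
            rw [show M * M ^ (N - 1) = M ^ (1 + (N - 1)) by rw [pow_add, pow_one], ← pow_add]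
            congr 1
            have h' : (k + 1) * N = k * N + N := by ring
            omega
          apply le_of_eq
          rw [← e]; ring
        · have hC : ((N:ℝ) - 1) * ((k:ℝ) * ((k:ℝ) + 1) / 2) = 0 := by
            rcases Nat.eq_zero_or_pos k with hk0 | hk0
            · rw [hk0]; norm_num
            · have h1k : 1 ≤ k * N := Nat.mul_le_mul hk0 hN
              have hkn1 : k * N = 1 := by omega
              have hN1 : N = 1 := Nat.dvd_one.mp ⟨k, by rw [← hkn1]; ring⟩
              rw [hN1]; norm_num
          rw [hC]
          norm_num
      have I3 : M * (((k:ℝ) * (((N:ℝ) - 1) * ε * M ^ (N - 2)) * M ^ (k - 1)) * M ^ (k * (N - 1)))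
          ≤ (k:ℝ) * ((N:ℝ) - 1) * ε * M ^ ((k + 1) * N - 2) := by
        rcases Nat.eq_zero_or_pos k with hk0 | hk0
        · rw [hk0]; norm_num
        by_cases hN2 : 2 ≤ N
        · obtain ⟨N', rfl⟩ : ∃ N', N = N' + 2 := ⟨N - 2, by omega⟩
          obtain ⟨k', rfl⟩ : ∃ k', k = k' + 1 := ⟨k - 1, by omega⟩
          apply le_of_eq
          have e1 : N' + 2 - 2 = N' := by omega
          have e2 : k' + 1 - 1 = k' := by omega
          have e3 : N' + 2 - 1 = N' + 1 := by omega
          have e4 : (k' + 1 + 1) * (N' + 2) - 2 = 1 + N' + k' + (k' + 1) * (N' + 1) := by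
            have h' : (k' + 1 + 1) * (N' + 2) = 1 + N' + k' + (k' + 1) * (N' + 1) + 2 := by ring
            omega
          rw [e1, e2, e3, e4, pow_add, pow_add, pow_add, pow_one]
          push_cast
          ring
        · have hN1 : N = 1 := by omega
          rw [hN1]; norm_num
      have hco : ((N:ℝ) - 1) * ε * M ^ ((k + 1) * N - 2)
            + ((N:ℝ) - 1) * ((k:ℝ) * ((k:ℝ) + 1) / 2) * ε * M ^ ((k + 1) * N - 2)
            + (k:ℝ) * ((N:ℝ) - 1) * ε * M ^ ((k + 1) * N - 2)
          = ((N:ℝ) - 1) * (((k:ℝ) + 1) * (((k:ℝ) + 1) + 1) / 2) * ε * M ^ ((k + 1) * N - 2) := by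
        ring
      push_cast
      linarith [I1, I2, I3, hco]
  -- window bound
  have window : ∀ s, ‖W s (N * m)‖ ≤ Real.exp (-γ * (N * m : ℕ)) := by
    intro s
    obtain ⟨Rm, hR, hEm⟩ := main m s
    have hPm : ‖Pc ^ m‖ ≤ ρ := by
      have e : Pc ^ m = Matrix.toEuclideanCLM (𝕜 := ℝ) (A p ^ m) := by
        rw [hPc, map_pow]
      rw [e]; exact hApm
    have htr : ‖W s (m * N)‖ ≤ ‖Pc ^ m * Rm‖ + ‖W s (m * N) - Pc ^ m * Rm‖ := by
      have e : W s (m * N) = Pc ^ m * Rm + (W s (m * N) - Pc ^ m * Rm) := by abel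
      calc ‖W s (m * N)‖ = ‖Pc ^ m * Rm + (W s (m * N) - Pc ^ m * Rm)‖ := by rw [← e]
      _ ≤ ‖Pc ^ m * Rm‖ + ‖W s (m * N) - Pc ^ m * Rm‖ := norm_add_le _ _
    have hPmR : ‖Pc ^ m * Rm‖ ≤ ρ * M ^ (m * (N - 1)) :=
      (norm_mul_le _ _).trans (mul_le_mul hPm hR (norm_nonneg _) hρ)
    have hWsm : ‖W s (N * m)‖ = ‖W s (m * N)‖ := by rw [Nat.mul_comm N m]
    rw [hWsm]
    have hexp1 : m * (N - 1) = (N - 1) * m := Nat.mul_comm _ _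
    have hexp2 : m * N - 2 = N * m - 2 := by rw [Nat.mul_comm]
    rw [hexp1] at hPmR
    rw [hexp2] at hEm
    calc ‖W s (m * N)‖ ≤ ‖Pc ^ m * Rm‖ + ‖W s (m * N) - Pc ^ m * Rm‖ := htr
    _ ≤ ρ * M ^ ((N - 1) * m)
        + ((N:ℝ) - 1) * ((m:ℝ) * ((m:ℝ) + 1) / 2) * ε * M ^ (N * m - 2) :=
        add_le_add hPmR hEm
    _ ≤ Real.exp (-γ * (N * m : ℕ)) := by
        have : ((N:ℝ) - 1) * ((m:ℝ) * ((m:ℝ) + 1) / 2) * ε * M ^ (N * m - 2)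
            = ((N:ℝ) - 1) * ((m:ℝ) * ((m:ℝ) + 1) / 2) * M ^ (N * m - 2) * ε := by ring
        rw [this]
        exact hkey
  -- products of windows
  have blocks : ∀ q, ‖W 0 (q * (N * m))‖ ≤ Real.exp (-γ * (N * m : ℕ)) ^ q := by
    intro q
    induction q with
    | zero =>
      have e : W 0 (0 * (N * m)) = 1 := by
        rw [Nat.zero_mul]
        simp only [hW, List.range'_zero, List.reverse_nil, List.map_nil, List.prod_nil]
      rw [e, pow_zero]
      exact h1
    | succ q ih =>
      have e : (q + 1) * (N * m) = q * (N * m) + N * m := by ring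
      rw [e, hWadd]
      calc ‖W (0 + q * (N * m)) (N * m) * W 0 (q * (N * m))‖
          ≤ ‖W (0 + q * (N * m)) (N * m)‖ * ‖W 0 (q * (N * m))‖ := norm_mul_le _ _
      _ ≤ Real.exp (-γ * (N * m : ℕ)) * Real.exp (-γ * (N * m : ℕ)) ^ q :=
          mul_le_mul (window _) ih (norm_nonneg _) (Real.exp_pos _).le
      _ = Real.exp (-γ * (N * m : ℕ)) ^ (q + 1) := (pow_succ' _ _).symm
  -- global bound for the abstract product
  have hMM1 : (1:ℝ) ≤ max 1 M := le_max_left 1 M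
  have hglobal : ∀ t : ℕ,
      ‖W 0 t‖ ≤ (max 1 M) ^ (N * m) * Real.exp (γ * (N * m : ℕ)) * Real.exp (-γ * t) := by
    intro t
    set q := t / (N * m) with hq
    set r := t % (N * m) with hr
    have hdm : N * m * q + r = t := Nat.div_add_mod t (N * m)
    have hrlt : r < N * m := Nat.mod_lt t (by omega)
    have hsplit : W 0 t = W (N * m * q) r * W 0 (N * m * q) := by
      conv_lhs => rw [← hdm]
      rw [hWadd, Nat.zero_add]
    have hb1 : ‖W (N * m * q) r‖ ≤ (max 1 M) ^ (N * m) := by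
      refine (hWnorm _ _).trans ?_
      refine (pow_le_pow_left₀ hM (le_max_right 1 M) r).trans ?_
      exact pow_le_pow_right₀ hMM1 hrlt.le
    have hb2 : ‖W 0 (N * m * q)‖ ≤ Real.exp (-γ * (N * m : ℕ)) ^ q := by
      rw [Nat.mul_comm (N * m) q]
      exact blocks q
    have hb3 : Real.exp (-γ * (N * m : ℕ)) ^ q
        ≤ Real.exp (γ * (N * m : ℕ)) * Real.exp (-γ * t) := by
      rw [← Real.exp_nat_mul, ← Real.exp_add]
      apply Real.exp_le_exp.mpr
      have hcast : ((N * m : ℕ) : ℝ) * q + r = t := by exact_mod_cast hdm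
      have hrle : (r : ℝ) ≤ ((N * m : ℕ) : ℝ) := by exact_mod_cast hrlt.le
      have e : (q : ℝ) * (-γ * ((N * m : ℕ) : ℝ)) = -γ * t + γ * r := by
        linear_combination (-γ) * hcast
      rw [e]
      have := mul_le_mul_of_nonneg_left hrle hγ.le
      linarith
    calc ‖W 0 t‖ = ‖W (N * m * q) r * W 0 (N * m * q)‖ := by rw [hsplit]
    _ ≤ ‖W (N * m * q) r‖ * ‖W 0 (N * m * q)‖ := norm_mul_le _ _
    _ ≤ (max 1 M) ^ (N * m) * (Real.exp (γ * (N * m : ℕ)) * Real.exp (-γ * t)) := by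
        refine mul_le_mul hb1 (hb2.trans hb3) (norm_nonneg _) ?_
        positivity
    _ = (max 1 M) ^ (N * m) * Real.exp (γ * (N * m : ℕ)) * Real.exp (-γ * t) := by ring
  have hTM : ∀ t : ℕ, Matrix.toEuclideanCLM (𝕜 := ℝ) (transitionMatrix A σ t) = W 0 t := by
    intro t
    show Matrix.toEuclideanCLM (𝕜 := ℝ)
        (((List.range t).reverse.map (fun i => A (σ i))).prod) = W 0 t
    rw [map_list_prod, List.map_map, List.range_eq_range']
    rfl
  have hbound : ∀ t : ℕ, 1 ≤ t →
      opNorm (transitionMatrix A σ t)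
        ≤ (max 1 M) ^ (N * m) * Real.exp (γ * (N * m : ℕ)) * Real.exp (-γ * t) := by
    intro t _
    show ‖Matrix.toEuclideanCLM (𝕜 := ℝ) (transitionMatrix A σ t)‖ ≤ _
    rw [hTM t]
    exact hglobal t
  refine ⟨(max 1 M) ^ (N * m) * Real.exp (γ * (N * m : ℕ)), by positivity, hbound, ?_⟩
  intro x₀ t ht
  calc ‖Matrix.toEuclideanCLM (𝕜 := ℝ) (transitionMatrix A σ t) x₀‖
      ≤ ‖Matrix.toEuclideanCLM (𝕜 := ℝ) (transitionMatrix A σ t)‖ * ‖x₀‖ :=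
      ContinuousLinearMap.le_opNorm _ _
  _ ≤ (max 1 M) ^ (N * m) * Real.exp (γ * (N * m : ℕ)) * Real.exp (-γ * t) * ‖x₀‖ :=
      mul_le_mul_of_nonneg_right (hbound t ht) (norm_nonneg _)
end

section
/- Let P be a finite set, let A_i (i ∈ P) be d×d real matrices, and let v_0 = p, v_1, …, v_{n−1} ∈ P (n ≥ 1) be pairwise distinct. Let m ≥ 1 with n·m ≥ 2, and let M ≥ 0, ρ ≥ 0, ε ≥ 0 satisfy: ‖A_{v_i}‖ ≤ M for all i ∈ {0, …, n−1}; ‖A_p^m‖ ≤ ρ; ‖A_p A_{v_i} − A_{v_i} A_p‖ ≤ ε for all i ∈ {1, …, n−1}; and ρ · M^{(n−1)m} + (n−1) · (m(m+1)/2) · M^{nm−2} · ε < 1. Define the periodic switching signal σ : ℕ → P by σ(t) = v_{t mod n}. Then there exist c > 0 and γ > 0 such that ‖A_{σ(t−1)} ⋯ A_{σ(1)} A_{σ(0)}‖ ≤ c e^{−γt} for all t ≥ 1, i.e., the switched system is globally exponentially stable under the periodic switching signal obtained by repeating the cycle p, v_1, …, v_{n−1}. -/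
namespace GESaux
variable {d : ℕ}

lemma opNorm_nonneg (A : Matrix (Fin d) (Fin d) ℝ) : 0 ≤ opNorm A := norm_nonneg _

lemma opNorm_zero : opNorm (0 : Matrix (Fin d) (Fin d) ℝ) = 0 := by
  unfold opNorm; rw [map_zero, norm_zero]

lemma opNorm_one_le : opNorm (1 : Matrix (Fin d) (Fin d) ℝ) ≤ 1 := by
  unfold opNorm; rw [map_one, ContinuousLinearMap.one_def]
  exact ContinuousLinearMap.norm_id_le

lemma opNorm_mul_le (A B : Matrix (Fin d) (Fin d) ℝ) :
    opNorm (A * B) ≤ opNorm A * opNorm B := by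
  unfold opNorm; rw [map_mul]; exact norm_mul_le _ _

lemma opNorm_add_le (A B : Matrix (Fin d) (Fin d) ℝ) :
    opNorm (A + B) ≤ opNorm A + opNorm B := by
  unfold opNorm; rw [map_add]; exact norm_add_le _ _

lemma opNorm_triangle (A B : Matrix (Fin d) (Fin d) ℝ) :
    opNorm A ≤ opNorm (A - B) + opNorm B := by
  unfold opNorm; rw [map_sub]
  exact (norm_le_insert' _ _).trans (by rw [add_comm])

lemma opNorm_mul_le_of_le {A B : Matrix (Fin d) (Fin d) ℝ} {a b : ℝ}
    (hA : opNorm A ≤ a) (hB : opNorm B ≤ b) (hb : 0 ≤ b) :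
    opNorm (A * B) ≤ a * b :=
  (opNorm_mul_le A B).trans
    (mul_le_mul hA hB (opNorm_nonneg _) ((opNorm_nonneg A).trans hA))

lemma opNorm_pow_le {A : Matrix (Fin d) (Fin d) ℝ} {a : ℝ}
    (hA : opNorm A ≤ a) (ha : 0 ≤ a) (k : ℕ) : opNorm (A ^ k) ≤ a ^ k := by
  induction k with
  | zero => simpa using opNorm_one_le
  | succ k ih =>
      rw [pow_succ' A k, pow_succ' a k]
      exact opNorm_mul_le_of_le hA ih (pow_nonneg ha k)

lemma opNorm_prod_le {M : ℝ} (hM : 0 ≤ M) :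
    ∀ l : List (Matrix (Fin d) (Fin d) ℝ), (∀ X ∈ l, opNorm X ≤ M) →
      opNorm l.prod ≤ M ^ l.length := by
  intro l
  induction l with
  | nil => intro _; simpa using opNorm_one_le
  | cons X l ih =>
      intro h
      rw [List.prod_cons, List.length_cons, pow_succ' M]
      exact opNorm_mul_le_of_le (h X (by simp)) (ih fun Y hY => h Y (by simp [hY]))
        (pow_nonneg hM _)

lemma comm_list {B : Matrix (Fin d) (Fin d) ℝ} {M ε : ℝ} (hM : 0 ≤ M) (hε : 0 ≤ ε) :
    ∀ l : List (Matrix (Fin d) (Fin d) ℝ),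
      (∀ X ∈ l, opNorm X ≤ M ∧ opNorm (B * X - X * B) ≤ ε) →
      opNorm (B * l.prod - l.prod * B) ≤ (l.length : ℝ) * M ^ (l.length - 1) * ε := by
  intro l
  induction l with
  | nil => intro _; simp [opNorm_zero]
  | cons X l ih =>
      intro h
      have hX := h X (by simp)
      have hl := ih fun Y hY => h Y (by simp [hY])
      have key : B * (X :: l).prod - (X :: l).prod * B
          = (B * X - X * B) * l.prod + X * (B * l.prod - l.prod * B) := by
        rw [List.prod_cons]; noncomm_ring
      have hprod : opNorm l.prod ≤ M ^ l.length :=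
        opNorm_prod_le hM l fun Y hY => (h Y (by simp [hY])).1
      have h1 : opNorm ((B * X - X * B) * l.prod) ≤ ε * M ^ l.length :=
        opNorm_mul_le_of_le hX.2 hprod (pow_nonneg hM _)
      have h2 : opNorm (X * (B * l.prod - l.prod * B))
          ≤ M * ((l.length : ℝ) * M ^ (l.length - 1) * ε) :=
        opNorm_mul_le_of_le hX.1 hl
          (by positivity)
      rw [key]
      refine (opNorm_add_le _ _).trans ?_
      have hfin : ε * M ^ l.length + M * ((l.length : ℝ) * M ^ (l.length - 1) * ε)
          ≤ ((X :: l).length : ℝ) * M ^ ((X :: l).length - 1) * ε := by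
        rcases Nat.eq_zero_or_pos l.length with h0 | h0
        · have h1 : (X :: l).length = 1 := by simp [h0]
          rw [h1, h0]; norm_num
        · have hMl : M * M ^ (l.length - 1) = M ^ l.length := by
            rw [← pow_succ' M]; congr 1; omega
          have : (X :: l).length - 1 = l.length := by simp
          rw [this, List.length_cons]
          push_cast
          nlinarith [pow_nonneg hM l.length, (Nat.cast_nonneg l.length : (0:ℝ) ≤ _),
            mul_le_mul_of_nonneg_right (le_of_eq hMl) (mul_nonneg ((Nat.cast_nonneg l.length : (0:ℝ) ≤ _)) hε)]
      exact le_trans (add_le_add h1 h2) hfin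

lemma comm_pow {B C : Matrix (Fin d) (Fin d) ℝ} {Mb δ : ℝ}
    (hMb : 0 ≤ Mb) (hδ : 0 ≤ δ) (hB : opNorm B ≤ Mb)
    (h : opNorm (B * C - C * B) ≤ δ) (k : ℕ) :
    opNorm (B ^ k * C - C * B ^ k) ≤ (k : ℝ) * Mb ^ (k - 1) * δ := by
  induction k with
  | zero => simp [opNorm_zero]
  | succ k ih =>
      have key : B ^ (k+1) * C - C * B ^ (k+1)
          = B * (B ^ k * C - C * B ^ k) + (B * C - C * B) * B ^ k := by
        rw [pow_succ' B k]; noncomm_ring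
      rw [key]
      refine (opNorm_add_le _ _).trans ?_
      have h1 : opNorm (B * (B ^ k * C - C * B ^ k)) ≤ Mb * ((k : ℝ) * Mb ^ (k - 1) * δ) :=
        opNorm_mul_le_of_le hB ih (by positivity)
      have h2 : opNorm ((B * C - C * B) * B ^ k) ≤ δ * Mb ^ k :=
        opNorm_mul_le_of_le h (opNorm_pow_le hB hMb k) (pow_nonneg hMb k)
      refine le_trans (add_le_add h1 h2) ?_
      have hfin : Mb * ((k : ℝ) * Mb ^ (k - 1) * δ) + δ * Mb ^ k
          ≤ ((k+1 : ℕ) : ℝ) * Mb ^ ((k+1) - 1) * δ := by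
        rcases Nat.eq_zero_or_pos k with h0 | h0
        · rw [h0]; norm_num
        · have hMl : Mb * Mb ^ (k - 1) = Mb ^ k := by
            rw [← pow_succ' Mb]; congr 1; omega
          have hk1 : (k+1) - 1 = k := by omega
          rw [hk1]
          push_cast
          nlinarith [pow_nonneg hMb k, (Nat.cast_nonneg k : (0:ℝ) ≤ _),
            mul_le_mul_of_nonneg_right (le_of_eq hMl)
              (mul_nonneg (Nat.cast_nonneg k : (0:ℝ) ≤ _) hδ)]
      exact hfin

lemma pow_diff {B C : Matrix (Fin d) (Fin d) ℝ} {Mb Mc δ : ℝ}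
    (hMb : 0 ≤ Mb) (hMc : 0 ≤ Mc) (hδ : 0 ≤ δ)
    (hB : opNorm B ≤ Mb) (hC : opNorm C ≤ Mc)
    (h : opNorm (B * C - C * B) ≤ δ) (k : ℕ) :
    opNorm ((C * B) ^ k - C ^ k * B ^ k)
      ≤ (k : ℝ) * ((k : ℝ) - 1) / 2 * (Mc * Mb) ^ (k - 1) * δ := by
  induction k with
  | zero => simp [opNorm_zero]
  | succ k ih =>
      have key : (C * B) ^ (k+1) - C ^ (k+1) * B ^ (k+1)
          = ((C * B) ^ k - C ^ k * B ^ k) * (C * B)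
            + C ^ k * (B ^ k * C - C * B ^ k) * B := by
        rw [pow_succ (C*B) k, pow_succ C k, pow_succ B k]; noncomm_ring
      rw [key]
      refine (opNorm_add_le _ _).trans ?_
      have hCB : opNorm (C * B) ≤ Mc * Mb := opNorm_mul_le_of_le hC hB hMb
      have h1 : opNorm (((C * B) ^ k - C ^ k * B ^ k) * (C * B))
          ≤ (k : ℝ) * ((k : ℝ) - 1) / 2 * (Mc * Mb) ^ (k - 1) * δ * (Mc * Mb) :=
        opNorm_mul_le_of_le ih hCB (mul_nonneg hMc hMb)
      have h2 : opNorm (C ^ k * (B ^ k * C - C * B ^ k) * B)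
          ≤ Mc ^ k * ((k : ℝ) * Mb ^ (k - 1) * δ) * Mb :=
        opNorm_mul_le_of_le
          (opNorm_mul_le_of_le (opNorm_pow_le hC hMc k)
            (comm_pow hMb hδ hB h k) (by positivity)) hB hMb
      refine le_trans (add_le_add h1 h2) ?_
      rcases Nat.eq_zero_or_pos k with h0 | h0
      · rw [h0]; norm_num
      · have e1 : (Mc * Mb) ^ (k - 1) * (Mc * Mb) = (Mc * Mb) ^ k := by
          rw [← pow_succ]; congr 1; omega
        have e2 : Mc ^ k * Mb ^ (k - 1) * Mb = (Mc * Mb) ^ k := by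
          rw [mul_assoc, ← pow_succ Mb]
          have : k - 1 + 1 = k := by omega
          rw [this, mul_pow]
        have hk1 : (k+1) - 1 = k := by omega
        rw [hk1]
        refine le_of_eq ?_
        calc (k : ℝ) * ((k : ℝ) - 1) / 2 * (Mc * Mb) ^ (k - 1) * δ * (Mc * Mb)
              + Mc ^ k * ((k : ℝ) * Mb ^ (k - 1) * δ) * Mb
            = (k : ℝ) * ((k : ℝ) - 1) / 2 * ((Mc * Mb) ^ (k - 1) * (Mc * Mb)) * δ
              + (k : ℝ) * (Mc ^ k * Mb ^ (k - 1) * Mb) * δ := by ring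
          _ = ((k : ℝ) * ((k : ℝ) - 1) / 2 + (k : ℝ)) * (Mc * Mb) ^ k * δ := by
              rw [e1, e2]; ring
          _ = ((k+1 : ℕ) : ℝ) * (((k+1 : ℕ) : ℝ) - 1) / 2 * (Mc * Mb) ^ k * δ := by
              push_cast; ring

variable {P : Type*}

lemma tm_zero (A : P → Matrix (Fin d) (Fin d) ℝ) (σ : ℕ → P) :
    transitionMatrix A σ 0 = 1 := by simp [transitionMatrix]

lemma tm_succ (A : P → Matrix (Fin d) (Fin d) ℝ) (σ : ℕ → P) (t : ℕ) :
    transitionMatrix A σ (t+1) = A (σ t) * transitionMatrix A σ t := by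
  simp [transitionMatrix, List.range_succ]

lemma tm_add (A : P → Matrix (Fin d) (Fin d) ℝ) (σ : ℕ → P) (s t : ℕ) :
    transitionMatrix A σ (s + t)
      = ((List.range t).reverse.map (fun i => A (σ (s+i)))).prod
          * transitionMatrix A σ s := by
  induction t with
  | zero => simp
  | succ t ih =>
      have hst : s + (t+1) = (s+t)+1 := by omega
      rw [hst, tm_succ, ih, List.range_succ]
      simp [mul_assoc]

lemma tm_add_periodic (A : P → Matrix (Fin d) (Fin d) ℝ) (σ : ℕ → P) (s t : ℕ)
    (h : ∀ i, σ (s + i) = σ i) :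
    transitionMatrix A σ (s + t)
      = transitionMatrix A σ t * transitionMatrix A σ s := by
  rw [tm_add]
  have : (fun i => A (σ (s + i))) = fun i => A (σ i) := by
    funext i; rw [h i]
  rw [this]
  rfl

end GESaux

open GESaux in
theorem ges_of_periodic_cycle {d n m : ℕ} {P : Type*} [Fintype P]
    (hn : 1 ≤ n) (hm : 1 ≤ m) (hnm : 2 ≤ n * m)
    (A : P → Matrix (Fin d) (Fin d) ℝ)
    (v : Fin n → P) (hv : Function.Injective v) (p : P) (hp : v ⟨0, hn⟩ = p)
    (M ρ ε : ℝ) (hM : 0 ≤ M) (hρ : 0 ≤ ρ) (hε : 0 ≤ ε)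
    (hA : ∀ i : Fin n, opNorm (A (v i)) ≤ M)
    (hApm : opNorm (A p ^ m) ≤ ρ)
    (hcomm : ∀ i : Fin n, i ≠ ⟨0, hn⟩ → opNorm (A p * A (v i) - A (v i) * A p) ≤ ε)
    (hkey : ρ * M ^ ((n - 1) * m) +
        ((n : ℝ) - 1) * ((m : ℝ) * ((m : ℝ) + 1) / 2) * M ^ (n * m - 2) * ε < 1) :
    ∃ c : ℝ, 0 < c ∧ ∃ γ : ℝ, 0 < γ ∧ ∀ t : ℕ, 1 ≤ t →
      opNorm (transitionMatrix A (fun s => v ⟨s % n, Nat.mod_lt s hn⟩) t) ≤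
        c * Real.exp (-γ * t) := by
    classical
  set σ : ℕ → P := fun s => v ⟨s % n, Nat.mod_lt s hn⟩ with hσdef
  set Φ : ℕ → Matrix (Fin d) (Fin d) ℝ := transitionMatrix A σ with hΦdef
  -- basic facts
  have hAσ : ∀ i, opNorm (A (σ i)) ≤ M := fun i => hA _
  have hΦ_le : ∀ t, opNorm (Φ t) ≤ M ^ t := by
    intro t
    induction t with
    | zero => rw [hΦdef, tm_zero]; simpa using opNorm_one_le
    | succ t ih =>
        rw [hΦdef, tm_succ, pow_succ' M]
        exact opNorm_mul_le_of_le (hAσ t) ih (pow_nonneg hM t)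
  have hper : ∀ s, n ∣ s → ∀ i, σ (s + i) = σ i := by
    intro s hs i
    have hmod : (s + i) % n = i % n := by
      obtain ⟨k, rfl⟩ := hs; exact Nat.mul_add_mod n k i
    rw [hσdef]
    exact congrArg v (Fin.ext hmod)
  -- the one-period product
  have hσ0 : σ 0 = p := by
    rw [hσdef, ← hp]
    exact congrArg v (Fin.ext (Nat.zero_mod n))
  have hΦ1 : Φ 1 = A p := by
    rw [hΦdef, show (1:ℕ) = 0 + 1 from rfl, tm_succ, tm_zero, mul_one, hσ0]
  set lC : List (Matrix (Fin d) (Fin d) ℝ) :=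
    (List.range (n-1)).reverse.map (fun i => A (σ (1+i))) with hlCdef
  set C : Matrix (Fin d) (Fin d) ℝ := lC.prod with hCdef
  have hΦn : Φ n = C * A p := by
    rw [hΦdef, show n = 1 + (n-1) by omega, tm_add, ← hΦdef, hΦ1]
  have hlen : lC.length = n - 1 := by simp [hlCdef]
  have hmem : ∀ X ∈ lC, opNorm X ≤ M ∧ opNorm (A p * X - X * A p) ≤ ε := by
    intro X hX
    rw [hlCdef] at hX
    simp only [List.mem_map, List.mem_reverse, List.mem_range] at hX
    obtain ⟨i, hi, rfl⟩ := hX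
    have h1i : 1 + i < n := by omega
    have hσi : σ (1+i) = v ⟨1+i, h1i⟩ := by
      rw [hσdef]
      exact congrArg v (Fin.ext (Nat.mod_eq_of_lt h1i))
    rw [hσi]
    refine ⟨hA _, hcomm _ ?_⟩
    exact Fin.ne_of_val_ne (show 1 + i ≠ 0 by omega)
  have hAp : opNorm (A p) ≤ M := hp ▸ hA ⟨0, hn⟩
  have hC : opNorm C ≤ M ^ (n-1) := by
    rw [hCdef, ← hlen]
    exact opNorm_prod_le hM lC (fun X hX => (hmem X hX).1)
  have hδ0 : (0:ℝ) ≤ ((n-1 : ℕ) : ℝ) * M ^ (n-1-1) * ε := by positivity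
  have hcommC : opNorm (A p * C - C * A p) ≤ ((n-1 : ℕ) : ℝ) * M ^ (n-1-1) * ε := by
    have := comm_list hM hε lC hmem
    rwa [hlen] at this
  -- iterated periods
  have hΦnk : ∀ k, Φ (n * k) = (C * A p) ^ k := by
    intro k
    induction k with
    | zero => rw [Nat.mul_zero, hΦdef, tm_zero, pow_zero]
    | succ k ih =>
        have : n * (k+1) = n * k + n := by ring
        rw [this, hΦdef, tm_add_periodic A σ (n*k) n (hper _ ⟨k, rfl⟩), ← hΦdef,
          hΦn, ih, pow_succ']
  -- bound on the norm of one super-period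
  have harith : (m:ℝ) * ((m:ℝ) - 1) / 2 * (M^(n-1) * M)^(m-1)
        * (((n-1 : ℕ) : ℝ) * M ^ (n-1-1) * ε)
      ≤ ((n : ℝ) - 1) * ((m : ℝ) * ((m : ℝ) + 1) / 2) * M ^ (n * m - 2) * ε := by
    rcases Nat.lt_or_ge n 2 with h2 | h2
    · have hn1 : n = 1 := by omega
      subst hn1
      norm_num
    · have e1 : M^(n-1) * M = M^n := by
        rw [← pow_succ]; congr 1; omega
      have e2 : (M^n)^(m-1) * M^(n-1-1) = M^(n*m-2) := by
        rw [← pow_mul, ← pow_add]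
        congr 1
        obtain ⟨m', rfl⟩ : ∃ m', m = m' + 1 := ⟨m - 1, by omega⟩
        have hms : n * (m' + 1) = n * m' + n := Nat.mul_succ n m'
        simp only [Nat.add_sub_cancel]
        omega
      have e3 : ((n-1 : ℕ) : ℝ) = (n : ℝ) - 1 := by
        push_cast [Nat.cast_sub hn]; ring
      have hn1R : (0:ℝ) ≤ (n : ℝ) - 1 := by
        have : (1:ℝ) ≤ (n:ℝ) := by exact_mod_cast hn
        linarith
      have hX : (0:ℝ) ≤ M ^ (n*m-2) * ε := by positivity
      have hmR : (0:ℝ) ≤ (m:ℝ) := Nat.cast_nonneg m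
      rw [e1, e3]
      calc (m:ℝ) * ((m:ℝ) - 1) / 2 * (M^n)^(m-1) * (((n:ℝ) - 1) * M ^ (n-1-1) * ε)
          = (m:ℝ) * ((m:ℝ) - 1) / 2 * ((n:ℝ) - 1) * ((M^n)^(m-1) * M^(n-1-1)) * ε := by
            ring
        _ = (m:ℝ) * ((m:ℝ) - 1) / 2 * ((n:ℝ) - 1) * M^(n*m-2) * ε := by rw [e2]
        _ ≤ ((n : ℝ) - 1) * ((m : ℝ) * ((m : ℝ) + 1) / 2) * M ^ (n * m - 2) * ε := by
            nlinarith [mul_nonneg (mul_nonneg hn1R hX) hmR]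
  have hr_bound : opNorm (Φ (n * m))
      ≤ ρ * M ^ ((n - 1) * m) +
        ((n : ℝ) - 1) * ((m : ℝ) * ((m : ℝ) + 1) / 2) * M ^ (n * m - 2) * ε := by
    rw [hΦnk m]
    have hCm : opNorm (C ^ m) ≤ M ^ ((n-1) * m) := by
      have := opNorm_pow_le hC (pow_nonneg hM _) m
      rwa [← pow_mul] at this
    have t1 : opNorm (C ^ m * A p ^ m) ≤ M ^ ((n-1)*m) * ρ :=
      opNorm_mul_le_of_le hCm hApm hρ
    have hF := pow_diff hM (pow_nonneg hM (n-1)) hδ0 hAp hC hcommC m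
    have tri := opNorm_triangle ((C * A p) ^ m) (C ^ m * A p ^ m)
    have hsym : opNorm ((C * A p) ^ m - C ^ m * A p ^ m)
        ≤ (m:ℝ) * ((m:ℝ) - 1) / 2 * (M^(n-1) * M)^(m-1)
          * (((n-1:ℕ):ℝ) * M ^ (n-1-1) * ε) := by
      refine hF.trans (le_of_eq ?_)
      ring
    linarith [hsym.trans harith]
  have hrlt : opNorm (Φ (n * m)) < 1 := lt_of_le_of_lt hr_bound hkey
  -- set up the exponential decay
  set N : ℕ := n * m with hNdef
  have hNpos : 0 < N := by omega
  have hΦNk : ∀ k, Φ (N * k) = (Φ N) ^ k := by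
    intro k
    rw [hNdef, mul_assoc, hΦnk (m * k), hΦnk m, ← pow_mul]
  set r' : ℝ := max (opNorm (Φ N)) (1/2) with hr'def
  have hr'pos : (0:ℝ) < r' := lt_of_lt_of_le one_half_pos (le_max_right _ _)
  have hr'lt1 : r' < 1 := max_lt hrlt one_half_lt_one
  have hΦN_le : opNorm (Φ N) ≤ r' := le_max_left _ _
  have hlog : Real.log r' < 0 := Real.log_neg hr'pos hr'lt1
  set K : ℝ := (max 1 M) ^ N with hKdef
  have hK1 : (1:ℝ) ≤ K := one_le_pow₀ (le_max_left 1 M)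
  have hKpos : (0:ℝ) < K := lt_of_lt_of_le one_pos hK1
  refine ⟨2 * K, by positivity, -Real.log r' / N, ?_, ?_⟩
  · apply div_pos (by linarith) (by exact_mod_cast hNpos)
  intro t ht
  set γ : ℝ := -Real.log r' / N with hγdef
  set q : ℕ := t / N with hqdef
  set s : ℕ := t % N with hsdef
  have hts : N * q + s = t := Nat.div_add_mod t N
  have hsN : s < N := Nat.mod_lt t hNpos
  have hsplit : Φ t = Φ s * Φ (N * q) := by
    rw [← hts, hΦdef, tm_add_periodic A σ (N * q) s (hper _ ⟨m * q, by rw [hNdef]; ring⟩)]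
  have h1 : opNorm (Φ s) ≤ K := by
    refine (hΦ_le s).trans ?_
    calc M ^ s ≤ (max 1 M) ^ s := pow_le_pow_left₀ hM (le_max_right 1 M) s
      _ ≤ (max 1 M) ^ N := pow_le_pow_right₀ (le_max_left 1 M) (le_of_lt hsN)
  have h2 : opNorm (Φ (N * q)) ≤ r' ^ q := by
    rw [hΦNk q]
    exact opNorm_pow_le hΦN_le (le_of_lt hr'pos) q
  have hΦt : opNorm (Φ t) ≤ K * r' ^ q := by
    rw [hsplit]
    exact opNorm_mul_le_of_le h1 h2 (pow_nonneg (le_of_lt hr'pos) q)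
  -- exponential estimate on r' ^ q
  have hqN : (t:ℝ) ≤ ((q:ℝ) + 1) * N := by
    have : t < N * (q + 1) := by
      have hNq : N * (q + 1) = N * q + N := Nat.mul_succ N q
      omega
    have := (Nat.cast_lt (α := ℝ)).mpr this
    push_cast at this ⊢
    linarith
  have hNR : (0:ℝ) < (N:ℝ) := by exact_mod_cast hNpos
  have hdiv : (t:ℝ) / N ≤ (q:ℝ) + 1 := by
    rw [div_le_iff₀ hNR]; linarith
  have hstep : ((q:ℝ) + 1) * Real.log r' ≤ ((t:ℝ) / N) * Real.log r' :=
    mul_le_mul_of_nonpos_right hdiv (le_of_lt hlog)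
  have hexp : r' ^ q ≤ Real.exp (-γ * t) * 2 := by
    have hpow : r' ^ q = Real.exp ((q:ℝ) * Real.log r') := by
      rw [Real.exp_nat_mul, Real.exp_log hr'pos]
    have hγt : -γ * t = ((t:ℝ) / N) * Real.log r' := by
      rw [hγdef]; field_simp
    have hle : (q:ℝ) * Real.log r' ≤ -γ * t + (- Real.log r') := by
      rw [hγt]; linarith
    calc r' ^ q = Real.exp ((q:ℝ) * Real.log r') := hpow
      _ ≤ Real.exp (-γ * t + (- Real.log r')) := Real.exp_le_exp.mpr hle
      _ = Real.exp (-γ * t) * Real.exp (- Real.log r') := Real.exp_add _ _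
      _ ≤ Real.exp (-γ * t) * 2 := by
          have hinv : Real.exp (- Real.log r') = r'⁻¹ := by
            rw [Real.exp_neg, Real.exp_log hr'pos]
          rw [hinv]
          have : r'⁻¹ ≤ 2 := by
            have h12 : (1/2 : ℝ) ≤ r' := le_max_right _ _
            calc r'⁻¹ ≤ (1/2 : ℝ)⁻¹ := inv_anti₀ one_half_pos h12
              _ = 2 := by norm_num
          exact mul_le_mul_of_nonneg_left this (le_of_lt (Real.exp_pos _))
  calc opNorm (Φ t) ≤ K * r' ^ q := hΦt
    _ ≤ K * (Real.exp (-γ * t) * 2) :=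
        mul_le_mul_of_nonneg_left hexp (le_of_lt hKpos)
    _ = 2 * K * Real.exp (-γ * t) := by ring
end
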